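/- Suppose P1, P2, P3, P4 are column-stochastic. Let p, q ∈ ℝ^k and let Δ be a real k×k matrix. Let B_⊥ and C_⊥ denote the unfoldings B and C built from middle matrix p qᵀ, and B, C those built from middle matrix p qᵀ + Δ (with the same P1, P2, P3, P4). Then | ‖B‖* − ‖B_⊥‖* | ≤ k² · ‖Δ‖_F and | ‖C‖* − ‖C_⊥‖* | ≤ k² · ‖Δ‖_F. -/

import Mathlib

/-- The nuclear norm of a real matrix: the sum of its singular values. -/
noncomputable def nuclearNorm {α β : Type*} [Fintype α] [Fintype β] [DecidableEq β]
    (M : Matrix α β ℝ) : ℝ :=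
  ∑ i, Real.sqrt ((Matrix.isHermitian_conjTranspose_mul_self M).eigenvalues i)

/-- The Frobenius norm of a real matrix. -/
noncomputable def frobeniusNorm {α β : Type*} [Fintype α] [Fintype β] (M : Matrix α β ℝ) : ℝ :=
  Real.sqrt (∑ i, ∑ j, (M i j) ^ 2)

/-- A matrix is column-stochastic if its entries are nonnegative and each column sums to 1. -/
def colStochastic {α β : Type*} [Fintype α] (M : Matrix α β ℝ) : Prop :=
  (∀ i j, 0 ≤ M i j) ∧ ∀ j, ∑ i, M i j = 1

/-- The unfolding `B` built from middle matrix `Mmid`: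
`B ((x1,x3),(x2,x4)) = Σ_{h,g} P1(x1,h) P2(x2,h) Mmid(h,g) P3(x3,g) P4(x4,g)`. -/
def unfoldB {n k : ℕ} (P1 P2 P3 P4 : Matrix (Fin n) (Fin k) ℝ)
    (Mmid : Matrix (Fin k) (Fin k) ℝ) : Matrix (Fin n × Fin n) (Fin n × Fin n) ℝ :=
  Matrix.of fun r c => ∑ h, ∑ g, P1 r.1 h * P2 c.1 h * Mmid h g * P3 r.2 g * P4 c.2 g

/-- The unfolding `C` built from middle matrix `Mmid`:
`C ((x1,x4),(x2,x3)) = Σ_{h,g} P1(x1,h) P2(x2,h) Mmid(h,g) P3(x3,g) P4(x4,g)`. -/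
def unfoldC {n k : ℕ} (P1 P2 P3 P4 : Matrix (Fin n) (Fin k) ℝ)
    (Mmid : Matrix (Fin k) (Fin k) ℝ) : Matrix (Fin n × Fin n) (Fin n × Fin n) ℝ :=
  Matrix.of fun r c => ∑ h, ∑ g, P1 r.1 h * P2 c.1 h * Mmid h g * P3 c.2 g * P4 r.2 g


open Matrix BigOperators

namespace NuclearAux

variable {m : Type*} [Fintype m] [DecidableEq m]

noncomputable def lam (M : Matrix m m ℝ) (i : m) : ℝ :=
  (Matrix.isHermitian_conjTranspose_mul_self M).eigenvalues i

noncomputable def sig (M : Matrix m m ℝ) (i : m) : ℝ := Real.sqrt (lam M i)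

noncomputable def v (M : Matrix m m ℝ) (i : m) : m → ℝ :=
  ⇑((Matrix.isHermitian_conjTranspose_mul_self M).eigenvectorBasis i)

lemma nuclearNorm_eq (M : Matrix m m ℝ) : nuclearNorm M = ∑ i, sig M i := rfl

lemma lam_nonneg (M : Matrix m m ℝ) (i : m) : 0 ≤ lam M i := by
  have h := Matrix.posSemidef_conjTranspose_mul_self M
  rw [Matrix.conjTranspose_eq_transpose_of_trivial] at h
  exact h.eigenvalues_nonneg i

lemma sig_nonneg (M : Matrix m m ℝ) (i : m) : 0 ≤ sig M i := Real.sqrt_nonneg _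

lemma nuclearNorm_nonneg (M : Matrix m m ℝ) : 0 ≤ nuclearNorm M :=
  Finset.sum_nonneg fun i _ => sig_nonneg M i

lemma mulVec_v (M : Matrix m m ℝ) (i : m) :
    (Mᵀ * M) *ᵥ v M i = lam M i • v M i :=
  (Matrix.isHermitian_conjTranspose_mul_self M).mulVec_eigenvectorBasis i

lemma v_dot_v (M : Matrix m m ℝ) (i j : m) :
    v M i ⬝ᵥ v M j = if i = j then 1 else 0 := by
  have h := (Matrix.isHermitian_conjTranspose_mul_self M).eigenvectorBasis.orthonormal
  rw [orthonormal_iff_ite] at h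
  have := h i j
  rw [PiLp.inner_apply] at this
  simpa [dotProduct, v, mul_comm] using this

end NuclearAux

namespace NuclearAux

variable {m : Type*} [Fintype m] [DecidableEq m]

lemma sum_v_mul_v (M : Matrix m m ℝ) (b c : m) :
    ∑ i, v M i b * v M i c = if b = c then 1 else 0 := by
  set hH := Matrix.isHermitian_conjTranspose_mul_self M
  have h : (hH.eigenvectorUnitary : Matrix m m ℝ) * star (hH.eigenvectorUnitary : Matrix m m ℝ)
      = 1 := (Matrix.mem_unitaryGroup_iff).mp hH.eigenvectorUnitary.2
  have := congrFun (congrFun h b) c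
  simp only [Matrix.mul_apply, Matrix.star_apply, Matrix.one_apply,
    Matrix.IsHermitian.eigenvectorUnitary_apply, star_trivial] at this
  simpa [v] using this

/-- Trace identity: `tr (Xᵀ M) = ∑ i ⟨X v_i, M v_i⟩`. -/
lemma trace_eq_sum_dot (M X A : Matrix m m ℝ) :
    (Xᵀ * A).trace = ∑ i, (X *ᵥ v M i) ⬝ᵥ (A *ᵥ v M i) := by
  have : ∑ i, (X *ᵥ v M i) ⬝ᵥ (A *ᵥ v M i)
      = ∑ i, ∑ a, ∑ b, ∑ c, X a b * v M i b * (A a c * v M i c) := by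
    simp [dotProduct, Matrix.mulVec, Finset.sum_mul_sum, mul_comm]
  rw [this]
  rw [Finset.sum_comm]
  have : ∀ a, ∑ i, ∑ b, ∑ c, X a b * v M i b * (A a c * v M i c)
      = ∑ b, X a b * A a b := by
    intro a
    rw [Finset.sum_comm]
    refine Finset.sum_congr rfl fun b _ => ?_
    rw [Finset.sum_comm]
    have : ∀ c, ∑ i, X a b * v M i b * (A a c * v M i c)
        = X a b * A a c * (if b = c then 1 else 0) := by
      intro c
      rw [← sum_v_mul_v M b c, Finset.mul_sum]
      refine Finset.sum_congr rfl fun i _ => by ring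
    simp only [this]
    simp
  simp only [this]
  rw [Matrix.trace, Finset.sum_comm]
  simp [Matrix.diag, Matrix.mul_apply, Matrix.transpose_apply, mul_comm]

end NuclearAux

namespace NuclearAux

variable {m : Type*} [Fintype m] [DecidableEq m]

lemma Mv_dot_Mv (M : Matrix m m ℝ) (i j : m) :
    (M *ᵥ v M i) ⬝ᵥ (M *ᵥ v M j) = if i = j then lam M j else 0 := by
  have h1 : v M i ⬝ᵥ ((Mᵀ * M) *ᵥ v M j) = (M *ᵥ v M i) ⬝ᵥ (M *ᵥ v M j) := by
    rw [← Matrix.mulVec_mulVec, Matrix.dotProduct_mulVec, Matrix.vecMul_transpose]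
  rw [← h1, mulVec_v, dotProduct_smul, smul_eq_mul, v_dot_v]
  split <;> simp

/-- left singular vectors (zero when the singular value vanishes) -/
noncomputable def u (M : Matrix m m ℝ) (i : m) : m → ℝ :=
  if lam M i = 0 then 0 else (sig M i)⁻¹ • (M *ᵥ v M i)

lemma mulVec_v_eq_sig_smul_u (M : Matrix m m ℝ) (i : m) :
    M *ᵥ v M i = sig M i • u M i := by
  unfold u
  split_ifs with h
  · have h0 : (M *ᵥ v M i) ⬝ᵥ (M *ᵥ v M i) = 0 := by rw [Mv_dot_Mv]; simp [h]
    have : M *ᵥ v M i = 0 := by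
      funext a
      have hnn : ∀ b ∈ Finset.univ, (0:ℝ) ≤ (M *ᵥ v M i) b * (M *ᵥ v M i) b :=
        fun b _ => mul_self_nonneg _
      have := (Finset.sum_eq_zero_iff_of_nonneg hnn).mp h0 a (Finset.mem_univ a)
      exact mul_self_eq_zero.mp this
    simp [this]
  · rw [smul_smul]
    rw [mul_inv_cancel₀, one_smul]
    have : 0 < lam M i := lt_of_le_of_ne (lam_nonneg M i) (Ne.symm h)
    exact ne_of_gt (Real.sqrt_pos.mpr this)

lemma u_dot_u (M : Matrix m m ℝ) (i j : m) :
    u M i ⬝ᵥ u M j = if i = j ∧ lam M i ≠ 0 then 1 else 0 := by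
  rcases eq_or_ne (lam M i) 0 with hi | hi
  · rw [u, if_pos hi, zero_dotProduct, if_neg (by tauto)]
  · rcases eq_or_ne (lam M j) 0 with hj | hj
    · have hij : i ≠ j := fun h => hi (h ▸ hj)
      rw [u, u, if_neg hi, if_pos hj, dotProduct_zero, if_neg (by tauto)]
    · rw [u, u, if_neg hi, if_neg hj, smul_dotProduct, dotProduct_smul,
        Mv_dot_Mv]
      rcases eq_or_ne i j with rfl | hij
      · rw [if_pos rfl, if_pos ⟨rfl, hi⟩]
        have hpos : 0 < lam M i := lt_of_le_of_ne (lam_nonneg M i) (Ne.symm hi)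
        have hs : sig M i * sig M i = lam M i := Real.mul_self_sqrt hpos.le
        have hsne : sig M i ≠ 0 := ne_of_gt (Real.sqrt_pos.mpr hpos)
        rw [smul_eq_mul, smul_eq_mul, ← hs]
        field_simp
      · rw [if_neg hij, if_neg (by tauto)]
        simp

end NuclearAux

namespace NuclearAux

variable {m : Type*} [Fintype m] [DecidableEq m]

/-- Cauchy–Schwarz for the dot product. -/
lemma dot_le (a b : m → ℝ) : a ⬝ᵥ b ≤ Real.sqrt (a ⬝ᵥ a) * Real.sqrt (b ⬝ᵥ b) := by
  have := Real.sum_mul_le_sqrt_mul_sqrt Finset.univ a b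
  simpa [dotProduct, pow_two] using this

/-- The dual witness matrix from the SVD of `M`. -/
noncomputable def Xm (M : Matrix m m ℝ) : Matrix m m ℝ :=
  Matrix.of fun a b => ∑ i, u M i a * v M i b

lemma Xm_mulVec (M : Matrix m m ℝ) (w : m → ℝ) :
    Xm M *ᵥ w = ∑ i, (v M i ⬝ᵥ w) • u M i := by
  funext a
  simp [Xm, Matrix.mulVec, dotProduct, Finset.sum_mul, Finset.sum_apply,
    Finset.mul_sum]
  rw [Finset.sum_comm]
  exact Finset.sum_congr rfl fun i _ => Finset.sum_congr rfl fun b _ => by ring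

lemma Xm_mulVec_v (M : Matrix m m ℝ) (j : m) : Xm M *ᵥ v M j = u M j := by
  rw [Xm_mulVec]
  rw [Finset.sum_eq_single j]
  · rw [v_dot_v, if_pos rfl, one_smul]
  · intro i _ hij
    rw [v_dot_v, if_neg hij, zero_smul]
  · simp

lemma dot_sum_sum {ι : Type*} [Fintype ι] (f g : ι → m → ℝ) :
    (∑ i, f i) ⬝ᵥ (∑ j, g j) = ∑ i, ∑ j, (f i ⬝ᵥ g j) := by
  simp only [dotProduct, Finset.sum_apply, Finset.sum_mul_sum]
  rw [Finset.sum_comm]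
  exact Finset.sum_congr rfl fun i _ => Finset.sum_comm ..

/-- `Xm` is an (operator-norm) contraction. -/
lemma Xm_contraction (M : Matrix m m ℝ) (w : m → ℝ) :
    (Xm M *ᵥ w) ⬝ᵥ (Xm M *ᵥ w) ≤ w ⬝ᵥ w := by
  rw [Xm_mulVec]
  have hexp : (∑ i, (v M i ⬝ᵥ w) • u M i) ⬝ᵥ (∑ j, (v M j ⬝ᵥ w) • u M j)
      = ∑ i, ∑ j, (v M i ⬝ᵥ w) * (v M j ⬝ᵥ w) * (u M i ⬝ᵥ u M j) := by
    rw [dot_sum_sum]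
    refine Finset.sum_congr rfl fun i _ => Finset.sum_congr rfl fun j _ => ?_
    rw [smul_dotProduct, dotProduct_smul, smul_eq_mul, smul_eq_mul]
    ring
  rw [hexp]
  have hstep : ∀ i, ∑ j, (v M i ⬝ᵥ w) * (v M j ⬝ᵥ w) * (u M i ⬝ᵥ u M j)
      ≤ (v M i ⬝ᵥ w) ^ 2 := by
    intro i
    rw [Finset.sum_eq_single i]
    · rw [u_dot_u]
      split_ifs with h
      · exact le_of_eq (by ring)
      · rw [mul_zero]
        positivity
    · intro j _ hij
      rw [u_dot_u, if_neg (by tauto), mul_zero]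
    · simp
  calc ∑ i, ∑ j, (v M i ⬝ᵥ w) * (v M j ⬝ᵥ w) * (u M i ⬝ᵥ u M j)
      ≤ ∑ i, (v M i ⬝ᵥ w) ^ 2 := Finset.sum_le_sum fun i _ => hstep i
    _ = w ⬝ᵥ w := by
        have h1 : ∀ i : m, (v M i ⬝ᵥ w) ^ 2 = ∑ b, ∑ c, v M i b * v M i c * (w b * w c) := by
          intro i
          rw [pow_two, dotProduct, Finset.sum_mul_sum]
          exact Finset.sum_congr rfl fun b _ => Finset.sum_congr rfl fun c _ => by ring
        simp only [h1]
        rw [Finset.sum_comm]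
        have h3 : ∀ b, ∑ i, ∑ c, v M i b * v M i c * (w b * w c) = w b * w b := by
          intro b
          rw [Finset.sum_comm]
          have h2 : ∀ c, ∑ i, v M i b * v M i c * (w b * w c)
              = (if b = c then 1 else 0) * (w b * w c) := by
            intro c
            rw [← sum_v_mul_v M b c, Finset.sum_mul]
          simp only [h2]
          simp
        simp only [h3]
        rfl

end NuclearAux

namespace NuclearAux

variable {m : Type*} [Fintype m] [DecidableEq m]

lemma sig_eq_zero_of_lam_eq_zero {M : Matrix m m ℝ} {i : m} (h : lam M i = 0) :
    sig M i = 0 := by simp [sig, h]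

/-- Attainment: `tr (Xmᵀ M) = ‖M‖*`. -/
lemma trace_Xm : ∀ M : Matrix m m ℝ, ((Xm M)ᵀ * M).trace = nuclearNorm M := by
  intro M
  rw [trace_eq_sum_dot M (Xm M) M, nuclearNorm_eq]
  refine Finset.sum_congr rfl fun i _ => ?_
  rw [Xm_mulVec_v, mulVec_v_eq_sig_smul_u, dotProduct_smul, u_dot_u, smul_eq_mul]
  rcases eq_or_ne (lam M i) 0 with h | h
  · rw [sig_eq_zero_of_lam_eq_zero h]
    simp
  · rw [if_pos ⟨rfl, h⟩, mul_one]

/-- Dual upper bound: if `X` is a contraction then `tr (Xᵀ A) ≤ ‖A‖*`. -/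
lemma trace_le_nuclearNorm (X A : Matrix m m ℝ)
    (hX : ∀ w : m → ℝ, (X *ᵥ w) ⬝ᵥ (X *ᵥ w) ≤ w ⬝ᵥ w) :
    (Xᵀ * A).trace ≤ nuclearNorm A := by
  rw [trace_eq_sum_dot A X A, nuclearNorm_eq]
  refine Finset.sum_le_sum fun i _ => ?_
  rw [mulVec_v_eq_sig_smul_u, dotProduct_smul, smul_eq_mul]
  rcases eq_or_ne (lam A i) 0 with h | h
  · rw [sig_eq_zero_of_lam_eq_zero h, zero_mul]
  · have hb : (X *ᵥ v A i) ⬝ᵥ u A i ≤ 1 := by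
      calc (X *ᵥ v A i) ⬝ᵥ u A i
          ≤ Real.sqrt ((X *ᵥ v A i) ⬝ᵥ (X *ᵥ v A i)) * Real.sqrt (u A i ⬝ᵥ u A i) :=
            dot_le _ _
        _ ≤ 1 * 1 := by
            apply mul_le_mul
            · calc Real.sqrt ((X *ᵥ v A i) ⬝ᵥ (X *ᵥ v A i))
                  ≤ Real.sqrt (v A i ⬝ᵥ v A i) := Real.sqrt_le_sqrt (hX _)
                _ = 1 := by rw [v_dot_v, if_pos rfl, Real.sqrt_one]
            · rw [u_dot_u, if_pos ⟨rfl, h⟩, Real.sqrt_one]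
            · exact Real.sqrt_nonneg _
            · exact zero_le_one
        _ = 1 := by ring
    calc sig A i * ((X *ᵥ v A i) ⬝ᵥ u A i) ≤ sig A i * 1 :=
          mul_le_mul_of_nonneg_left hb (sig_nonneg A i)
      _ = sig A i := mul_one _

/-- Triangle-type bound: `‖A + E‖* ≤ ‖A‖* + ‖E‖*`. -/
lemma nuclearNorm_add_le (A E : Matrix m m ℝ) :
    nuclearNorm (A + E) ≤ nuclearNorm A + nuclearNorm E := by
  have h := trace_Xm (A + E)
  rw [Matrix.mul_add, Matrix.trace_add] at h
  calc nuclearNorm (A + E) = ((Xm (A + E))ᵀ * A).trace + ((Xm (A + E))ᵀ * E).trace := h.symm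
    _ ≤ nuclearNorm A + nuclearNorm E :=
        add_le_add (trace_le_nuclearNorm _ _ (Xm_contraction _))
          (trace_le_nuclearNorm _ _ (Xm_contraction _))

lemma eig_congr {A B : Matrix m m ℝ} (h : A = B) (hA : A.IsHermitian) (hB : B.IsHermitian) :
    hA.eigenvalues = hB.eigenvalues := by subst h; rfl

lemma nuclearNorm_neg (E : Matrix m m ℝ) : nuclearNorm (-E) = nuclearNorm E := by
  unfold nuclearNorm
  have h : (-E)ᴴ * (-E) = Eᴴ * E := by simp
  rw [eig_congr h]

/-- `| ‖A+E‖* − ‖A‖* | ≤ ‖E‖*`. -/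
lemma abs_nuclearNorm_sub_le (A E : Matrix m m ℝ) :
    |nuclearNorm (A + E) - nuclearNorm A| ≤ nuclearNorm E := by
  rw [abs_sub_le_iff]
  constructor
  · linarith [nuclearNorm_add_le A E]
  · have : nuclearNorm A ≤ nuclearNorm (A + E) + nuclearNorm E := by
      have := nuclearNorm_add_le (A + E) (-E)
      rw [nuclearNorm_neg] at this
      simpa using this
    linarith

end NuclearAux

namespace NuclearAux

variable {m : Type*} [Fintype m] [DecidableEq m]

lemma trace_eq_sum_lam (M : Matrix m m ℝ) : (Mᵀ * M).trace = ∑ i, lam M i := by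
  have hH := Matrix.isHermitian_conjTranspose_mul_self M
  have h1 : star (hH.eigenvectorUnitary : Matrix m m ℝ) * (hH.eigenvectorUnitary : Matrix m m ℝ)
      = 1 := (Matrix.mem_unitaryGroup_iff').mp hH.eigenvectorUnitary.2
  rw [show (Mᵀ * M) = _ from hH.spectral_theorem]
  rw [Unitary.conjStarAlgAut_apply]
  rw [Matrix.trace_mul_comm, ← Matrix.mul_assoc, h1, Matrix.one_mul, Matrix.trace_diagonal]
  simp [lam]

lemma sum_lam_eq_frobenius_sq (M : Matrix m m ℝ) :
    ∑ i, lam M i = ∑ a, ∑ b, (M a b) ^ 2 := by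
  rw [← trace_eq_sum_lam, Matrix.trace]
  rw [Finset.sum_comm]
  refine Finset.sum_congr rfl fun a _ => ?_
  simp [Matrix.diag, Matrix.mul_apply, pow_two]

lemma nuclearNorm_le_sqrt_rank_mul_frobenius (E : Matrix m m ℝ) (r : ℕ) (hr : E.rank ≤ r) :
    nuclearNorm E ≤ Real.sqrt r * frobeniusNorm E := by
  classical
  set s : Finset m := Finset.univ.filter (fun i => lam E i ≠ 0) with hs
  have hcard : s.card = E.rank := by
    have h1 : (Eᵀ * E).rank = E.rank := Matrix.rank_conjTranspose_mul_self E
    have h2 := (Matrix.isHermitian_conjTranspose_mul_self E).rank_eq_card_non_zero_eigs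
    exact (Fintype.card_subtype _).symm.trans (h2.symm.trans h1)
  have hnu : nuclearNorm E = ∑ i ∈ s, sig E i := by
    rw [nuclearNorm_eq, Finset.sum_filter_of_ne]
    intro i _ hne
    intro h
    exact hne (by simp [sig, h])
  have hsq : (∑ i ∈ s, sig E i) ^ 2 ≤ (r : ℝ) * ∑ a, ∑ b, (E a b) ^ 2 := by
    calc (∑ i ∈ s, sig E i) ^ 2 ≤ (s.card : ℝ) * ∑ i ∈ s, (sig E i) ^ 2 :=
          sq_sum_le_card_mul_sum_sq
      _ ≤ (r : ℝ) * ∑ i, lam E i := by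
          apply mul_le_mul
          · exact_mod_cast hcard ▸ hr
          · calc ∑ i ∈ s, (sig E i) ^ 2 = ∑ i ∈ s, lam E i := by
                  refine Finset.sum_congr rfl fun i _ => Real.sq_sqrt (lam_nonneg E i)
              _ ≤ ∑ i, lam E i :=
                  Finset.sum_le_sum_of_subset_of_nonneg (Finset.subset_univ s)
                    (fun i _ _ => lam_nonneg E i)
          · positivity
          · positivity
      _ = (r : ℝ) * ∑ a, ∑ b, (E a b) ^ 2 := by rw [sum_lam_eq_frobenius_sq]
  have hnn : 0 ≤ ∑ i ∈ s, sig E i := Finset.sum_nonneg fun i _ => sig_nonneg E i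
  rw [hnu, frobeniusNorm, ← Real.sqrt_mul (by positivity)]
  exact Real.le_sqrt_of_sq_le hsq

end NuclearAux

namespace NuclearAux

variable {α β : Type*} [Fintype α] [Fintype β]

/-- Matrices as Euclidean vectors. -/
noncomputable def toE : Matrix α β ℝ →ₗ[ℝ] EuclideanSpace ℝ (α × β) where
  toFun M := WithLp.toLp 2 (fun p => M p.1 p.2)
  map_add' := fun _ _ => rfl
  map_smul' := fun _ _ => rfl

lemma frob_eq_norm (M : Matrix α β ℝ) : frobeniusNorm M = ‖toE M‖ := by
  rw [EuclideanSpace.norm_eq, frobeniusNorm]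
  congr 1
  rw [Fintype.sum_prod_type]
  refine Finset.sum_congr rfl fun a _ => Finset.sum_congr rfl fun b _ => ?_
  rw [Real.norm_eq_abs, sq_abs]
  rfl

lemma frobeniusNorm_nonneg (M : Matrix α β ℝ) : 0 ≤ frobeniusNorm M := Real.sqrt_nonneg _

lemma frob_sum_smul_le {ι : Type*} [Fintype ι] (c : ι → ℝ) (f : ι → Matrix α β ℝ) :
    frobeniusNorm (∑ i, c i • f i) ≤ ∑ i, |c i| * frobeniusNorm (f i) := by
  rw [frob_eq_norm, map_sum]
  refine (norm_sum_le _ _).trans (le_of_eq ?_)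
  refine Finset.sum_congr rfl fun i _ => ?_
  rw [_root_.map_smul, norm_smul, Real.norm_eq_abs, frob_eq_norm]

/-- Cauchy–Schwarz: `∑ |Δ h g| ≤ k ‖Δ‖_F` for a `k × k` matrix. -/
lemma sum_abs_le_card_mul_frob {k : ℕ} (Δ : Matrix (Fin k) (Fin k) ℝ) :
    ∑ h, ∑ g, |Δ h g| ≤ (k : ℝ) * frobeniusNorm Δ := by
  have h1 : (∑ p : Fin k × Fin k, |Δ p.1 p.2|) ^ 2
      ≤ ((Finset.univ : Finset (Fin k × Fin k)).card : ℝ)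
        * ∑ p : Fin k × Fin k, |Δ p.1 p.2| ^ 2 := sq_sum_le_card_mul_sum_sq
  have hcard : ((Finset.univ : Finset (Fin k × Fin k)).card : ℝ) = (k : ℝ) * k := by
    simp [Finset.card_univ]
  rw [hcard] at h1
  have h2 : ∑ p : Fin k × Fin k, |Δ p.1 p.2| ^ 2 = ∑ h, ∑ g, Δ h g ^ 2 := by
    rw [Fintype.sum_prod_type]
    simp [sq_abs]
  rw [h2] at h1
  have h3 : ∑ h, ∑ g, |Δ h g| = ∑ p : Fin k × Fin k, |Δ p.1 p.2| := by
    rw [Fintype.sum_prod_type]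
  rw [h3, frobeniusNorm]
  have hnn : (0:ℝ) ≤ ∑ p : Fin k × Fin k, |Δ p.1 p.2| :=
    Finset.sum_nonneg fun _ _ => abs_nonneg _
  have h4 : ∑ p : Fin k × Fin k, |Δ p.1 p.2|
      ≤ Real.sqrt ((k:ℝ) * k * ∑ h, ∑ g, Δ h g ^ 2) := Real.le_sqrt_of_sq_le h1
  calc ∑ p : Fin k × Fin k, |Δ p.1 p.2| ≤ _ := h4
    _ = (k : ℝ) * Real.sqrt (∑ h, ∑ g, Δ h g ^ 2) := by
        rw [Real.sqrt_mul (by positivity), Real.sqrt_mul_self (by positivity)]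

end NuclearAux

namespace NuclearAux

lemma colSq_le_one {n k : ℕ} {P : Matrix (Fin n) (Fin k) ℝ} (hP : colStochastic P)
    (h : Fin k) : ∑ a, (P a h) ^ 2 ≤ 1 := by
  have hsum := hP.2 h
  calc ∑ a, (P a h) ^ 2 ≤ ∑ a, P a h * ∑ b, P b h := by
        refine Finset.sum_le_sum fun a _ => ?_
        rw [pow_two]
        refine mul_le_mul_of_nonneg_left ?_ (hP.1 a h)
        exact Finset.single_le_sum (fun b _ => hP.1 b h) (Finset.mem_univ a)
    _ = 1 := by rw [← Finset.sum_mul, hsum, one_mul]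

lemma unfoldB_add {n k : ℕ} (P1 P2 P3 P4 : Matrix (Fin n) (Fin k) ℝ)
    (A Δ : Matrix (Fin k) (Fin k) ℝ) :
    unfoldB P1 P2 P3 P4 (A + Δ) = unfoldB P1 P2 P3 P4 A + unfoldB P1 P2 P3 P4 Δ := by
  funext r c
  simp only [unfoldB, Matrix.of_apply, Matrix.add_apply, ← Finset.sum_add_distrib]
  refine Finset.sum_congr rfl fun h _ => Finset.sum_congr rfl fun g _ => by ring

lemma unfoldB_rank_le {n k : ℕ} (P1 P2 P3 P4 : Matrix (Fin n) (Fin k) ℝ)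
    (Δ : Matrix (Fin k) (Fin k) ℝ) :
    (unfoldB P1 P2 P3 P4 Δ).rank ≤ k * k := by
  have hfac : unfoldB P1 P2 P3 P4 Δ =
      (Matrix.of fun (r : Fin n × Fin n) (p : Fin k × Fin k) => P1 r.1 p.1 * P3 r.2 p.2) *
      (Matrix.of fun (p : Fin k × Fin k) (c : Fin n × Fin n) =>
        Δ p.1 p.2 * P2 c.1 p.1 * P4 c.2 p.2) := by
    funext r c
    simp only [unfoldB, Matrix.of_apply, Matrix.mul_apply, Fintype.sum_prod_type]
    refine Finset.sum_congr rfl fun h _ => Finset.sum_congr rfl fun g _ => by ring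
  rw [hfac]
  refine le_trans (Matrix.rank_mul_le_left _ _) (le_trans (Matrix.rank_le_card_width _) ?_)
  simp

/-- rank-one building block -/
def blockR {n k : ℕ} (P1 P2 P3 P4 : Matrix (Fin n) (Fin k) ℝ) (p : Fin k × Fin k) :
    Matrix (Fin n × Fin n) (Fin n × Fin n) ℝ :=
  Matrix.of fun r c => P1 r.1 p.1 * P3 r.2 p.2 * (P2 c.1 p.1 * P4 c.2 p.2)

lemma sum_sq_pair {n k : ℕ} (P Q : Matrix (Fin n) (Fin k) ℝ) (h g : Fin k) :
    ∑ r : Fin n × Fin n, (P r.1 h * Q r.2 g) ^ 2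
      = (∑ a, (P a h) ^ 2) * (∑ a, (Q a g) ^ 2) := by
  rw [Finset.sum_mul_sum, Fintype.sum_prod_type]
  exact Finset.sum_congr rfl fun a _ => Finset.sum_congr rfl fun b _ => by
    simp [mul_pow]

lemma frob_blockR_le_one {n k : ℕ} {P1 P2 P3 P4 : Matrix (Fin n) (Fin k) ℝ}
    (h1 : colStochastic P1) (h2 : colStochastic P2)
    (h3 : colStochastic P3) (h4 : colStochastic P4) (p : Fin k × Fin k) :
    frobeniusNorm (blockR P1 P2 P3 P4 p) ≤ 1 := by
  rw [frobeniusNorm]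
  rw [show (1:ℝ) = Real.sqrt 1 from Real.sqrt_one.symm]
  apply Real.sqrt_le_sqrt
  have hentry : ∑ r : Fin n × Fin n, ∑ c : Fin n × Fin n, (blockR P1 P2 P3 P4 p r c) ^ 2
      = ((∑ a, (P1 a p.1) ^ 2) * (∑ a, (P3 a p.2) ^ 2))
        * ((∑ a, (P2 a p.1) ^ 2) * (∑ a, (P4 a p.2) ^ 2)) := by
    rw [← sum_sq_pair P1 P3 p.1 p.2, ← sum_sq_pair P2 P4 p.1 p.2, Finset.sum_mul_sum]
    refine Finset.sum_congr rfl fun r _ => Finset.sum_congr rfl fun c _ => ?_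
    rw [blockR, Matrix.of_apply, mul_pow]
  rw [hentry]
  have g1 := colSq_le_one h1 p.1
  have g2 := colSq_le_one h2 p.1
  have g3 := colSq_le_one h3 p.2
  have g4 := colSq_le_one h4 p.2
  have n1 : (0:ℝ) ≤ ∑ a, (P1 a p.1) ^ 2 := by positivity
  have n2 : (0:ℝ) ≤ ∑ a, (P2 a p.1) ^ 2 := by positivity
  have n3 : (0:ℝ) ≤ ∑ a, (P3 a p.2) ^ 2 := by positivity
  have n4 : (0:ℝ) ≤ ∑ a, (P4 a p.2) ^ 2 := by positivity
  have m1 : (∑ a, (P1 a p.1) ^ 2) * (∑ a, (P3 a p.2) ^ 2) ≤ 1 := by nlinarith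
  have m2 : (∑ a, (P2 a p.1) ^ 2) * (∑ a, (P4 a p.2) ^ 2) ≤ 1 := by nlinarith
  nlinarith [m1, m2, mul_nonneg n1 n3, mul_nonneg n2 n4]

lemma unfoldB_eq_sum_blockR {n k : ℕ} (P1 P2 P3 P4 : Matrix (Fin n) (Fin k) ℝ)
    (Δ : Matrix (Fin k) (Fin k) ℝ) :
    unfoldB P1 P2 P3 P4 Δ = ∑ p : Fin k × Fin k, Δ p.1 p.2 • blockR P1 P2 P3 P4 p := by
  funext r c
  simp only [unfoldB, Matrix.of_apply, Finset.sum_apply, Matrix.sum_apply, Matrix.smul_apply,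
    blockR, smul_eq_mul, Fintype.sum_prod_type]
  refine Finset.sum_congr rfl fun h _ => Finset.sum_congr rfl fun g _ => by ring

lemma frob_unfoldB_le {n k : ℕ} {P1 P2 P3 P4 : Matrix (Fin n) (Fin k) ℝ}
    (h1 : colStochastic P1) (h2 : colStochastic P2)
    (h3 : colStochastic P3) (h4 : colStochastic P4) (Δ : Matrix (Fin k) (Fin k) ℝ) :
    frobeniusNorm (unfoldB P1 P2 P3 P4 Δ) ≤ (k : ℝ) * frobeniusNorm Δ := by
  rw [unfoldB_eq_sum_blockR]
  calc frobeniusNorm (∑ p : Fin k × Fin k, Δ p.1 p.2 • blockR P1 P2 P3 P4 p)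
      ≤ ∑ p : Fin k × Fin k, |Δ p.1 p.2| * frobeniusNorm (blockR P1 P2 P3 P4 p) :=
        frob_sum_smul_le _ _
    _ ≤ ∑ p : Fin k × Fin k, |Δ p.1 p.2| := by
        refine Finset.sum_le_sum fun p _ => ?_
        calc |Δ p.1 p.2| * frobeniusNorm (blockR P1 P2 P3 P4 p) ≤ |Δ p.1 p.2| * 1 :=
              mul_le_mul_of_nonneg_left (frob_blockR_le_one h1 h2 h3 h4 p) (abs_nonneg _)
          _ = |Δ p.1 p.2| := mul_one _
    _ = ∑ h, ∑ g, |Δ h g| := by rw [Fintype.sum_prod_type]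
    _ ≤ (k : ℝ) * frobeniusNorm Δ := sum_abs_le_card_mul_frob Δ

end NuclearAux

namespace NuclearAux

lemma unfoldC_eq_unfoldB {n k : ℕ} (P1 P2 P3 P4 : Matrix (Fin n) (Fin k) ℝ)
    (M : Matrix (Fin k) (Fin k) ℝ) :
    unfoldC P1 P2 P3 P4 M = unfoldB P1 P2 P4 P3 M := by
  funext r c
  simp only [unfoldC, unfoldB, Matrix.of_apply]
  exact Finset.sum_congr rfl fun h _ => Finset.sum_congr rfl fun g _ => by ring

lemma key {n k : ℕ} {P1 P2 P3 P4 : Matrix (Fin n) (Fin k) ℝ}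
    (h1 : colStochastic P1) (h2 : colStochastic P2)
    (h3 : colStochastic P3) (h4 : colStochastic P4)
    (A Δ : Matrix (Fin k) (Fin k) ℝ) :
    |nuclearNorm (unfoldB P1 P2 P3 P4 (A + Δ)) - nuclearNorm (unfoldB P1 P2 P3 P4 A)|
      ≤ (k : ℝ) ^ 2 * frobeniusNorm Δ := by
  rw [unfoldB_add]
  refine (abs_nuclearNorm_sub_le _ _).trans ?_
  have hsqrt : Real.sqrt ((k * k : ℕ) : ℝ) = (k : ℝ) := by
    push_cast
    exact Real.sqrt_mul_self (by positivity)
  calc nuclearNorm (unfoldB P1 P2 P3 P4 Δ)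
      ≤ Real.sqrt ((k * k : ℕ) : ℝ) * frobeniusNorm (unfoldB P1 P2 P3 P4 Δ) :=
        nuclearNorm_le_sqrt_rank_mul_frobenius _ _ (unfoldB_rank_le P1 P2 P3 P4 Δ)
    _ = (k : ℝ) * frobeniusNorm (unfoldB P1 P2 P3 P4 Δ) := by rw [hsqrt]
    _ ≤ (k : ℝ) * ((k : ℝ) * frobeniusNorm Δ) :=
        mul_le_mul_of_nonneg_left (frob_unfoldB_le h1 h2 h3 h4 Δ) (by positivity)
    _ = (k : ℝ) ^ 2 * frobeniusNorm Δ := by ring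

end NuclearAux


/-- Perturbation bounds for the unfoldings `B` and `C`:
`| ‖B‖* − ‖B_⊥‖* | ≤ k² ‖Δ‖_F` and `| ‖C‖* − ‖C_⊥‖* | ≤ k² ‖Δ‖_F`. -/
theorem nuclearNorm_unfoldB_C_perturbation (n k : ℕ) (hn : 0 < n) (hk : 0 < k)
    (P1 P2 P3 P4 : Matrix (Fin n) (Fin k) ℝ)
    (h1 : colStochastic P1) (h2 : colStochastic P2)
    (h3 : colStochastic P3) (h4 : colStochastic P4)
    (p q : Fin k → ℝ) (Δ : Matrix (Fin k) (Fin k) ℝ) :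
    |nuclearNorm (unfoldB P1 P2 P3 P4 (Matrix.vecMulVec p q + Δ)) -
        nuclearNorm (unfoldB P1 P2 P3 P4 (Matrix.vecMulVec p q))| ≤
      (k : ℝ) ^ 2 * frobeniusNorm Δ ∧
    |nuclearNorm (unfoldC P1 P2 P3 P4 (Matrix.vecMulVec p q + Δ)) -
        nuclearNorm (unfoldC P1 P2 P3 P4 (Matrix.vecMulVec p q))| ≤
      (k : ℝ) ^ 2 * frobeniusNorm Δ := by
  constructor
  · exact NuclearAux.key h1 h2 h3 h4 (Matrix.vecMulVec p q) Δ
  · rw [NuclearAux.unfoldC_eq_unfoldB, NuclearAux.unfoldC_eq_unfoldB]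
    exact NuclearAux.key h1 h2 h4 h3 (Matrix.vecMulVec p q) Δ
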